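/- Let A_d ∈ ℝ^{n×n}, B_d ∈ ℝ^{n×m}, C ∈ ℝ^{p×n}, K ∈ ℝ^{m×n}, L ∈ ℝ^{n×p}, and set R := A_d − LC and R̄ := A_d − B_dK. Assume R^η = 0 for a positive integer η, and that there exist M_R > 0 and γ_R ∈ (0,1) with ‖R̄^ℓ‖ ≤ M_R γ_R^ℓ for all ℓ ∈ ℕ. Let N ≥ 2 be an integer, set α_ℓ := ‖C R^ℓ L‖ / N for ℓ = 0, …, η−1, and let F be the η×η matrix whose first row is (α_0, α_1, …, α_{η−1}), whose (i+1, i) entries are 1 for i = 1, …, η−1, and whose other entries are 0. Assume every complex eigenvalue of F has modulus strictly less than 1. Let E_st > 0 and define E : ℕ → ℝ by E_0 := ‖C‖ E_st, E_{k+1} := ‖C R^{k+1}‖ E_st + Σ_{ℓ=0}^{k} (‖C R^ℓ L‖/N) E_{k−ℓ} for 0 ≤ k ≤ η−2, and E_{k+1} := Σ_{ℓ=0}^{η−1} (‖C R^ℓ L‖/N) E_{k−ℓ} for k ≥ η−1. Let x, x̂ : ℕ → ℝ^n and q : ℕ → ℝ^p satisfy x̂_0 = 0, |x_0|_∞ ≤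 E_st, x_{k+1} = A_d x_k − B_d K x̂_k, and x̂_{k+1} = A_d x̂_k − B_d K x̂_k + L(q_k − C x̂_k). Assume that for every k, if |C x_k − C x̂_k|_∞ ≤ E_k then |C x_k − q_k|_∞ ≤ E_k/N. Then |C x_k − C x̂_k|_∞ ≤ E_k for all k, and there exist M_* > 0 and γ ∈ (0,1) such that |x_k|_∞ ≤ M_* γ^k and |x̂_k|_∞ ≤ M_* γ^k for all k ∈ ℕ. -/

import Mathlib

/-- The operator norm of a matrix induced by the `ℓ∞` (max) norms on
vectors, i.e. `‖M‖ = sup {|Mv|_∞ : |v|_∞ = 1}`. -/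
noncomputable def opNorm {m n : ℕ} (M : Matrix (Fin m) (Fin n) ℝ) : ℝ :=
  ‖LinearMap.toContinuousLinearMap (Matrix.mulVecLin M)‖

lemma opNorm_nonneg' {m n : ℕ} (M : Matrix (Fin m) (Fin n) ℝ) : 0 ≤ opNorm M :=
  norm_nonneg _

lemma mulVec_norm_le {m n : ℕ} (M : Matrix (Fin m) (Fin n) ℝ) (v : Fin n → ℝ) :
    ‖M.mulVec v‖ ≤ opNorm M * ‖v‖ := by
  have h := (LinearMap.toContinuousLinearMap (Matrix.mulVecLin M)).le_opNorm v
  simpa [opNorm] using h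

lemma mulVec_sum' {m n : ℕ} (M : Matrix (Fin m) (Fin n) ℝ) {ι : Type*} (s : Finset ι)
    (f : ι → Fin n → ℝ) : M.mulVec (∑ i ∈ s, f i) = ∑ i ∈ s, M.mulVec (f i) := by
  simp only [← Matrix.mulVecLin_apply, map_sum]

lemma opNorm_zero' {m n : ℕ} : opNorm (0 : Matrix (Fin m) (Fin n) ℝ) = 0 := by
  simp [opNorm]

/-- Closed form for a linear recursion `z (k+1) = A z k + B u k`. -/
lemma lin_rec_formula {n p : ℕ} (A : Matrix (Fin n) (Fin n) ℝ) (B : Matrix (Fin n) (Fin p) ℝ)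
    (z : ℕ → Fin n → ℝ) (u : ℕ → Fin p → ℝ)
    (hz : ∀ k, z (k + 1) = A.mulVec (z k) + B.mulVec (u k)) (k : ℕ) :
    z k = (A ^ k).mulVec (z 0)
      + ∑ ℓ ∈ Finset.range k, (A ^ ℓ * B).mulVec (u (k - 1 - ℓ)) := by
  induction k with
  | zero => simp
  | succ k ih =>
    rw [hz k, ih, Matrix.mulVec_add, Matrix.mulVec_mulVec, ← pow_succ', mulVec_sum']
    rw [Finset.sum_range_succ' (fun ℓ => (A ^ ℓ * B).mulVec (u (k + 1 - 1 - ℓ)))]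
    have hsum : ∑ ℓ ∈ Finset.range k, (A ^ (ℓ + 1) * B).mulVec (u (k + 1 - 1 - (ℓ + 1)))
        = ∑ ℓ ∈ Finset.range k, (A).mulVec ((A ^ ℓ * B).mulVec (u (k - 1 - ℓ))) :=
      Finset.sum_congr rfl (fun ℓ _ => by
        have hidx : k + 1 - 1 - (ℓ + 1) = k - 1 - ℓ := by omega
        rw [hidx, pow_succ', Matrix.mul_assoc, Matrix.mulVec_mulVec])
    rw [hsum, pow_zero, Matrix.one_mul]
    have : k + 1 - 1 - 0 = k := by omega
    rw [this]
    abel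

set_option maxHeartbeats 2000000 in
/-- Theorem 2 (discrete-time content): quantized output feedback with a
deadbeat Luenberger observer, `(A_d − LC)^η = 0`. -/
theorem quantized_output_feedback_deadbeat_observer
    {n m p : ℕ}
    (Ad : Matrix (Fin n) (Fin n) ℝ) (Bd : Matrix (Fin n) (Fin m) ℝ)
    (C : Matrix (Fin p) (Fin n) ℝ) (K : Matrix (Fin m) (Fin n) ℝ)
    (L : Matrix (Fin n) (Fin p) ℝ)
    (R Rbar : Matrix (Fin n) (Fin n) ℝ)
    (hR : R = Ad - L * C) (hRbar : Rbar = Ad - Bd * K)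
    (η : ℕ) (hη : 1 ≤ η) (hdeadbeat : R ^ η = 0)
    (MR γR : ℝ) (hMR : 0 < MR) (hγR : γR ∈ Set.Ioo (0:ℝ) 1)
    (hRbar_pow : ∀ ℓ : ℕ, opNorm (Rbar ^ ℓ) ≤ MR * γR ^ ℓ)
    (N : ℕ) (hN : 2 ≤ N)
    (F : Matrix (Fin η) (Fin η) ℝ)
    (hF : ∀ i j : Fin η, F i j =
      if (i : ℕ) = 0 then opNorm (C * R ^ (j : ℕ) * L) / N
      else if (i : ℕ) = (j : ℕ) + 1 then 1 else 0)
    (hSchur : ∀ z : ℂ, ((F.map (Complex.ofReal)).charpoly).IsRoot z →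
      ‖z‖ < 1)
    (Est : ℝ) (hEst : 0 < Est)
    (E : ℕ → ℝ)
    (hE0 : E 0 = opNorm C * Est)
    (hElow : ∀ k : ℕ, k + 2 ≤ η →
      E (k + 1) = opNorm (C * R ^ (k + 1)) * Est
        + ∑ ℓ ∈ Finset.range (k + 1), (opNorm (C * R ^ ℓ * L) / N) * E (k - ℓ))
    (hEhigh : ∀ k : ℕ, η - 1 ≤ k →
      E (k + 1) = ∑ ℓ ∈ Finset.range η, (opNorm (C * R ^ ℓ * L) / N) * E (k - ℓ))
    (x xhat : ℕ → Fin n → ℝ) (q : ℕ → Fin p → ℝ)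
    (hxhat0 : xhat 0 = 0) (hx0 : ‖x 0‖ ≤ Est)
    (hx : ∀ k : ℕ,
      x (k + 1) = Ad.mulVec (x k) - Bd.mulVec (K.mulVec (xhat k)))
    (hxhat : ∀ k : ℕ,
      xhat (k + 1) = Ad.mulVec (xhat k) - Bd.mulVec (K.mulVec (xhat k))
        + L.mulVec (q k - C.mulVec (xhat k)))
    (hquant : ∀ k : ℕ,
      ‖C.mulVec (x k) - C.mulVec (xhat k)‖ ≤ E k →
      ‖C.mulVec (x k) - q k‖ ≤ E k / N) :
    (∀ k : ℕ, ‖C.mulVec (x k) - C.mulVec (xhat k)‖ ≤ E k) ∧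
    ∃ Mstar : ℝ, 0 < Mstar ∧ ∃ γ ∈ Set.Ioo (0:ℝ) 1,
      ∀ k : ℕ, ‖x k‖ ≤ Mstar * γ ^ k ∧ ‖xhat k‖ ≤ Mstar * γ ^ k := by
  have hNR : (0:ℝ) < N := by exact_mod_cast Nat.lt_of_lt_of_le Nat.zero_lt_two hN
  have hN1 : (1:ℝ) ≤ N := by exact_mod_cast Nat.one_le_of_lt hN
  -- error and quantization-error sequences
  set e : ℕ → Fin n → ℝ := fun k => x k - xhat k with he
  set d : ℕ → Fin p → ℝ := fun k => C.mulVec (x k) - q k with hd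
  have he0 : e 0 = x 0 := by simp [he, hxhat0]
  have hCe : ∀ k, C.mulVec (x k) - C.mulVec (xhat k) = C.mulVec (e k) := by
    intro k
    rw [he]
    simp [Matrix.mulVec_sub]
  have estep : ∀ k, e (k + 1) = R.mulVec (e k) + L.mulVec (d k) := by
    intro k
    show x (k+1) - xhat (k+1) = _
    rw [hx k, hxhat k, hR]
    show _ = (Ad - L * C).mulVec (x k - xhat k) + L.mulVec (C.mulVec (x k) - q k)
    simp only [Matrix.sub_mulVec, Matrix.mulVec_sub, ← Matrix.mulVec_mulVec]
    abel
  have eform := lin_rec_formula R L e d estep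
  -- Claim 1 : the error bound propagates
  have claim1 : ∀ k, ‖C.mulVec (e k)‖ ≤ E k := by
    intro k
    induction k using Nat.strong_induction_on with
    | _ k ih =>
      have dbd : ∀ j, j < k → ‖d j‖ ≤ E j / N := by
        intro j hj
        exact hquant j (by rw [hCe j]; exact ih j hj)
      match k with
      | 0 =>
        rw [he0, hE0]
        exact (mulVec_norm_le C (x 0)).trans
          (mul_le_mul_of_nonneg_left hx0 (opNorm_nonneg' C))
      | Nat.succ j =>
        have hCek : C.mulVec (e (j+1)) = (C * R^(j+1)).mulVec (e 0)
            + ∑ ℓ ∈ Finset.range (j+1), (C * R^ℓ * L).mulVec (d (j - ℓ)) := by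
          rw [eform (j+1), Matrix.mulVec_add, mulVec_sum', Matrix.mulVec_mulVec]
          congr 1
          refine Finset.sum_congr rfl fun ℓ hℓ => ?_
          rw [Matrix.mulVec_mulVec, Matrix.mul_assoc]
          have : j + 1 - 1 - ℓ = j - ℓ := by omega
          rw [this]
        have hterm : ∀ ℓ, ℓ ≤ j →
            ‖(C * R^ℓ * L).mulVec (d (j - ℓ))‖ ≤ (opNorm (C * R^ℓ * L) / N) * E (j - ℓ) := by
          intro ℓ hℓ
          have hdℓ : ‖d (j - ℓ)‖ ≤ E (j - ℓ) / N := dbd _ (by omega)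
          calc ‖(C * R^ℓ * L).mulVec (d (j - ℓ))‖
              ≤ opNorm (C * R^ℓ * L) * ‖d (j - ℓ)‖ := mulVec_norm_le _ _
            _ ≤ opNorm (C * R^ℓ * L) * (E (j - ℓ) / N) :=
                mul_le_mul_of_nonneg_left hdℓ (opNorm_nonneg' _)
            _ = (opNorm (C * R^ℓ * L) / N) * E (j - ℓ) := by ring
        rcases le_or_gt (j+2) η with hcase | hcase
        · rw [hElow j hcase, hCek]
          refine (norm_add_le _ _).trans (add_le_add ?_ ?_)
          · exact (mulVec_norm_le _ _).trans (mul_le_mul_of_nonneg_left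
              (by rw [he0]; exact hx0) (opNorm_nonneg' _))
          · exact (norm_sum_le _ _).trans (Finset.sum_le_sum fun ℓ hℓ =>
              hterm ℓ (by simp only [Finset.mem_range] at hℓ; omega))
        · have hRp : R ^ (j+1) = 0 := by
            rw [show j+1 = η + (j+1-η) by omega, pow_add, hdeadbeat, Matrix.zero_mul]
          have h1 : (C * R^(j+1)).mulVec (e 0) = 0 := by
            rw [hRp, Matrix.mul_zero, Matrix.zero_mulVec]
          have h2 : ∑ ℓ ∈ Finset.range (j+1), (C * R^ℓ * L).mulVec (d (j - ℓ))
              = ∑ ℓ ∈ Finset.range η, (C * R^ℓ * L).mulVec (d (j - ℓ)) := by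
            symm
            apply Finset.sum_subset (Finset.range_subset_range.mpr (by omega))
            intro ℓ h1' h2'
            simp only [Finset.mem_range] at h1' h2'
            have : R ^ ℓ = 0 := by
              rw [show ℓ = η + (ℓ - η) by omega, pow_add, hdeadbeat, Matrix.zero_mul]
            rw [this, Matrix.mul_zero, Matrix.zero_mul, Matrix.zero_mulVec]
          rw [hEhigh j (by omega), hCek, h1, zero_add, h2]
          exact (norm_sum_le _ _).trans (Finset.sum_le_sum fun ℓ hℓ =>
            hterm ℓ (by simp only [Finset.mem_range] at hℓ; omega))
  have cl1 : ∀ k, ‖C.mulVec (x k) - C.mulVec (xhat k)‖ ≤ E k := by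
    intro k; rw [hCe k]; exact claim1 k
  have Enn : ∀ k, 0 ≤ E k := fun k => (norm_nonneg _).trans (claim1 k)
  have dbd' : ∀ k, ‖d k‖ ≤ E k / N := fun k => hquant k (cl1 k)
  -- Step 2 : the Schur condition forces the gain sum below 1
  have hs0 : 0 ≤ ∑ ℓ ∈ Finset.range η, opNorm (C * R ^ ℓ * L) / N :=
    Finset.sum_nonneg fun ℓ _ => div_nonneg (opNorm_nonneg' _) hNR.le
  have hslt : (∑ ℓ ∈ Finset.range η, opNorm (C * R ^ ℓ * L) / N) < 1 := by
    set s : ℝ := ∑ ℓ ∈ Finset.range η, opNorm (C * R ^ ℓ * L) / N with hs_def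
    by_contra hcon
    push_neg at hcon
    -- a real root `r ≥ 1` of the characteristic equation
    set f : ℝ → ℝ := fun r =>
      r ^ η - ∑ ℓ ∈ Finset.range η, (opNorm (C * R ^ ℓ * L) / N) * r ^ (η - 1 - ℓ) with hf_def
    have hcont : Continuous f :=
      (continuous_pow η).sub
        (continuous_finset_sum _ fun ℓ _ => continuous_const.mul (continuous_pow _))
    have hf1 : f 1 ≤ 0 := by
      simp only [hf_def, one_pow, mul_one]
      linarith
    have hfs : 0 < f (1 + s) := by
      have hr1 : (1:ℝ) ≤ 1 + s := by linarith
      have hrpos : (0:ℝ) < 1 + s := by linarith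
      have hub : ∑ ℓ ∈ Finset.range η, (opNorm (C * R ^ ℓ * L) / N) * (1+s) ^ (η - 1 - ℓ)
          ≤ s * (1+s) ^ (η - 1) := by
        rw [hs_def, Finset.sum_mul]
        refine Finset.sum_le_sum fun ℓ hℓ => ?_
        exact mul_le_mul_of_nonneg_left (pow_le_pow_right₀ hr1 (by omega))
          (div_nonneg (opNorm_nonneg' _) hNR.le)
      have hlt : s * (1+s) ^ (η - 1) < (1+s) ^ η := by
        calc s * (1+s) ^ (η - 1) < (1+s) * (1+s) ^ (η - 1) :=
              mul_lt_mul_of_pos_right (by linarith) (pow_pos hrpos _)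
          _ = (1+s) ^ η := by rw [← pow_succ']; congr 1; omega
      have : ∑ ℓ ∈ Finset.range η, (opNorm (C * R ^ ℓ * L) / N) * (1+s) ^ (η - 1 - ℓ)
          < (1+s) ^ η := lt_of_le_of_lt hub hlt
      simp only [hf_def]
      linarith
    obtain ⟨r, hrmem, hfr⟩ := intermediate_value_Icc (by linarith : (1:ℝ) ≤ 1 + s)
      hcont.continuousOn ⟨hf1, hfs.le⟩
    have hr1 : 1 ≤ r := hrmem.1
    have hrpos : (0:ℝ) < r := lt_of_lt_of_le zero_lt_one hr1
    -- eigenvector for eigenvalue `r`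
    set v : Fin η → ℝ := fun j => r ^ (η - 1 - (j:ℕ)) with hv
    have hvne : v ≠ 0 := by
      intro h
      have h2 := congrFun h ⟨η - 1, by omega⟩
      simp only [hv, Nat.sub_self, pow_zero, Pi.zero_apply] at h2
      exact one_ne_zero h2
    have heig : F.mulVec v = r • v := by
      funext i
      have hmv : F.mulVec v i = ∑ j : Fin η, F i j * v j := rfl
      by_cases hi : (i:ℕ) = 0
      · have hsum : ∑ j : Fin η, F i j * v j
            = ∑ ℓ ∈ Finset.range η, (opNorm (C * R ^ ℓ * L) / N) * r ^ (η - 1 - ℓ) := by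
          rw [← Fin.sum_univ_eq_sum_range fun ℓ => (opNorm (C * R ^ ℓ * L) / N) * r ^ (η - 1 - ℓ)]
          exact Finset.sum_congr rfl fun j _ => by rw [hF i j, if_pos hi, hv]
        have hsum2 : ∑ ℓ ∈ Finset.range η, (opNorm (C * R ^ ℓ * L) / N) * r ^ (η - 1 - ℓ)
            = r ^ η := by
          have := hfr
          simp only [hf_def] at this
          linarith
        rw [hmv, hsum, hsum2, Pi.smul_apply, hv]
        simp only [smul_eq_mul, hi]
        rw [← pow_succ']
        congr 1
        omega
      · have hij : ((i:ℕ) - 1) < η := by omega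
        have hsum : ∑ j : Fin η, F i j * v j = v ⟨(i:ℕ) - 1, hij⟩ := by
          rw [Finset.sum_eq_single (⟨(i:ℕ) - 1, hij⟩ : Fin η)]
          · rw [hF, if_neg hi, if_pos (by simp; omega), one_mul]
          · intro j _ hj
            rw [hF, if_neg hi, if_neg, zero_mul]
            intro hcontra
            exact hj (Fin.ext (by simp at hcontra ⊢; omega))
          · intro h; exact absurd (Finset.mem_univ _) h
        rw [hmv, hsum, Pi.smul_apply, hv]
        simp only [smul_eq_mul]
        rw [← pow_succ']
        congr 1
        omega
    have hdet : (Matrix.diagonal (fun _ : Fin η => r) - F).det = 0 := by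
      rw [← Matrix.exists_mulVec_eq_zero_iff]
      refine ⟨v, hvne, ?_⟩
      rw [Matrix.sub_mulVec, heig]
      funext i
      simp [Matrix.mulVec_diagonal]
    have hroot : F.charpoly.eval r = 0 := by
      have hch : F.charpoly.eval r = (Matrix.diagonal (fun _ : Fin η => r) - F).det := by
        rw [Matrix.charpoly, ← Polynomial.coe_evalRingHom, RingHom.map_det]
        congr 1
        ext i j
        by_cases hij : i = j <;>
          simp [Matrix.charmatrix_apply, Matrix.diagonal_apply, hij, Matrix.sub_apply]
      rw [hch, hdet]
    have hrootC : ((F.map Complex.ofReal).charpoly).IsRoot (r:ℂ) := by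
      have hmap : (F.map Complex.ofReal).charpoly = F.charpoly.map Complex.ofRealHom :=
        Matrix.charpoly_map F Complex.ofRealHom
      rw [Polynomial.IsRoot, hmap, Polynomial.eval_map]
      have : ((r:ℝ) : ℂ) = Complex.ofRealHom r := rfl
      rw [this, Polynomial.eval₂_at_apply, hroot]
      simp
    have habs := hSchur (r:ℂ) hrootC
    rw [Complex.norm_of_nonneg hrpos.le] at habs
    linarith
  -- Step 3 : geometric decay of `E`
  obtain ⟨θ, hθ0, hθ1, hsθ⟩ : ∃ θ : ℝ, 0 < θ ∧ θ < 1 ∧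
      (∑ ℓ ∈ Finset.range η, opNorm (C * R ^ ℓ * L) / N) ≤ θ ^ η := by
    have hσ0 : (0:ℝ) < max (∑ ℓ ∈ Finset.range η, opNorm (C * R ^ ℓ * L) / N) (1/2) :=
      lt_max_of_lt_right one_half_pos
    have hσ1 : max (∑ ℓ ∈ Finset.range η, opNorm (C * R ^ ℓ * L) / N) (1/2) < 1 :=
      max_lt hslt one_half_lt_one
    refine ⟨(max (∑ ℓ ∈ Finset.range η, opNorm (C * R ^ ℓ * L) / N) (1/2)) ^ ((η:ℝ)⁻¹),
      Real.rpow_pos_of_pos hσ0 _, Real.rpow_lt_one hσ0.le hσ1 (by positivity), ?_⟩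
    rw [Real.rpow_inv_natCast_pow hσ0.le (by omega)]
    exact le_max_left _ _
  obtain ⟨CE, hCE0, hbase⟩ : ∃ CE : ℝ, 0 < CE ∧ ∀ i, i ≤ η → E i ≤ CE * θ ^ i := by
    have hsum0 : (0:ℝ) ≤ ∑ i ∈ Finset.range (η+1), E i := Finset.sum_nonneg fun i _ => Enn i
    have hθη : (0:ℝ) < θ ^ η := pow_pos hθ0 η
    refine ⟨(∑ i ∈ Finset.range (η+1), E i + 1) / θ ^ η, div_pos (by linarith) hθη, ?_⟩
    intro i hi
    have h1 : E i ≤ ∑ j ∈ Finset.range (η+1), E j + 1 := by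
      have := Finset.single_le_sum (f := E) (fun j _ => Enn j)
        (Finset.mem_range.mpr (by omega : i < η + 1))
      linarith
    have h2 : θ ^ η ≤ θ ^ i := pow_le_pow_of_le_one hθ0.le hθ1.le hi
    calc E i ≤ ∑ j ∈ Finset.range (η+1), E j + 1 := h1
      _ = (∑ j ∈ Finset.range (η+1), E j + 1) / θ ^ η * θ ^ η := by
          rw [div_mul_cancel₀ _ hθη.ne']
      _ ≤ (∑ j ∈ Finset.range (η+1), E j + 1) / θ ^ η * θ ^ i :=
          mul_le_mul_of_nonneg_left h2 (div_nonneg (by linarith) hθη.le)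
  have Edecay : ∀ k, E k ≤ CE * θ ^ k := by
    intro k
    induction k using Nat.strong_induction_on with
    | _ k ih =>
      rcases le_or_gt k η with hk | hk
      · exact hbase k hk
      · obtain ⟨j, rfl⟩ : ∃ j, k = j + 1 := ⟨k - 1, by omega⟩
        rw [hEhigh j (by omega)]
        have hstep : ∀ ℓ ∈ Finset.range η, (opNorm (C * R ^ ℓ * L) / N) * E (j - ℓ)
            ≤ (opNorm (C * R ^ ℓ * L) / N) * (CE * θ ^ (j + 1 - η)) := by
          intro ℓ hℓ
          simp only [Finset.mem_range] at hℓ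
          have h1 : E (j - ℓ) ≤ CE * θ ^ (j - ℓ) := ih (j - ℓ) (by omega)
          have h2 : θ ^ (j - ℓ) ≤ θ ^ (j + 1 - η) :=
            pow_le_pow_of_le_one hθ0.le hθ1.le (by omega)
          exact mul_le_mul_of_nonneg_left
            (h1.trans (mul_le_mul_of_nonneg_left h2 hCE0.le))
            (div_nonneg (opNorm_nonneg' _) hNR.le)
        calc ∑ ℓ ∈ Finset.range η, (opNorm (C * R ^ ℓ * L) / N) * E (j - ℓ)
            ≤ ∑ ℓ ∈ Finset.range η, (opNorm (C * R ^ ℓ * L) / N) * (CE * θ ^ (j + 1 - η)) :=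
              Finset.sum_le_sum hstep
          _ = (∑ ℓ ∈ Finset.range η, opNorm (C * R ^ ℓ * L) / N) * (CE * θ ^ (j + 1 - η)) := by
              rw [Finset.sum_mul]
          _ ≤ θ ^ η * (CE * θ ^ (j + 1 - η)) :=
              mul_le_mul_of_nonneg_right hsθ (by positivity)
          _ = CE * θ ^ (j + 1) := by
              rw [mul_left_comm, ← pow_add]
              congr 2
              omega
  -- Step 4 : the common decay rate γ
  set γ : ℝ := (max θ γR + 1) / 2 with hγ_def
  have hμ1 : max θ γR < 1 := max_lt hθ1 hγR.2
  have hγ0 : 0 < γ := by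
    have : 0 < max θ γR := lt_max_of_lt_left hθ0
    rw [hγ_def]; linarith
  have hγ1 : γ < 1 := by rw [hγ_def]; linarith
  have hθγ : θ ≤ γ := by
    have : θ ≤ max θ γR := le_max_left _ _
    rw [hγ_def]; linarith
  have hγRγ : γR < γ := by
    have : γR ≤ max θ γR := le_max_right _ _
    rw [hγ_def]; linarith
  have EdecayG : ∀ k, E k ≤ CE * γ ^ k := fun k =>
    (Edecay k).trans (mul_le_mul_of_nonneg_left (pow_le_pow_left₀ hθ0.le hθγ k) hCE0.le)
  set ρ : ℝ := γR / γ with hρ_def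
  have hρ0 : 0 ≤ ρ := div_nonneg hγR.1.le hγ0.le
  have hρ1 : ρ < 1 := (div_lt_one hγ0).mpr hγRγ
  have hγρ : γR = ρ * γ := (div_mul_cancel₀ γR hγ0.ne').symm
  have geo : ∀ k, ∑ i ∈ Finset.range k, ρ ^ i ≤ (1 - ρ)⁻¹ := by
    intro k
    have h1ρ : 0 < 1 - ρ := by linarith
    have h := geom_sum_mul ρ k
    have hρk : (0:ℝ) ≤ ρ ^ k := pow_nonneg hρ0 k
    have heq : (∑ i ∈ Finset.range k, ρ ^ i) * (1 - ρ) = 1 - ρ ^ k := by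
      linear_combination -h
    rw [inv_eq_one_div, le_div_iff₀ h1ρ]
    linarith
  -- Step 5 : decay of the observer state
  set w : ℕ → Fin p → ℝ := fun k => q k - C.mulVec (xhat k) with hw
  have wbd : ∀ k, ‖w k‖ ≤ 2 * (CE * γ ^ k) := by
    intro k
    have h1 : w k = (C.mulVec (x k) - C.mulVec (xhat k)) - d k := by
      rw [hw, hd]; funext i; simp only [Pi.sub_apply]; ring
    rw [h1]
    refine (norm_sub_le _ _).trans ?_
    have h2 : ‖d k‖ ≤ E k := (dbd' k).trans (div_le_self (Enn k) hN1)
    have h3 := cl1 k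
    have h4 := EdecayG k
    linarith
  have hxhstep : ∀ k, xhat (k+1) = Rbar.mulVec (xhat k) + L.mulVec (w k) := by
    intro k
    rw [hxhat k, hRbar, Matrix.sub_mulVec, ← Matrix.mulVec_mulVec]
  have xhform := lin_rec_formula Rbar L xhat w hxhstep
  have hCL0 : (0:ℝ) ≤ opNorm L := opNorm_nonneg' L
  have hxhbd : ∀ k, ‖xhat k‖ ≤ (2 * CE * MR * opNorm L * (1 - ρ)⁻¹ / γ) * γ ^ k := by
    have h1ρ : (0:ℝ) < 1 - ρ := by linarith
    intro k
    match k with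
    | 0 =>
      rw [hxhat0]
      simp only [norm_zero, pow_zero, mul_one]
      have h2 : (0:ℝ) ≤ 2 * CE * MR * opNorm L * (1 - ρ)⁻¹ :=
        mul_nonneg (mul_nonneg (mul_nonneg (by linarith) hMR.le) hCL0)
          (inv_nonneg.mpr h1ρ.le)
      exact div_nonneg h2 hγ0.le
    | Nat.succ j =>
      rw [xhform (j+1), hxhat0, Matrix.mulVec_zero, zero_add]
      refine (norm_sum_le _ _).trans ?_
      have hterm : ∀ ℓ ∈ Finset.range (j+1),
          ‖(Rbar ^ ℓ * L).mulVec (w (j + 1 - 1 - ℓ))‖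
            ≤ (2 * CE * MR * opNorm L) * (ρ ^ ℓ * γ ^ j) := by
        intro ℓ hℓ
        simp only [Finset.mem_range] at hℓ
        have hidx : j + 1 - 1 - ℓ = j - ℓ := by omega
        rw [hidx, ← Matrix.mulVec_mulVec]
        have c1 : ‖(Rbar ^ ℓ).mulVec (L.mulVec (w (j - ℓ)))‖
            ≤ (MR * γR ^ ℓ) * (opNorm L * (2 * (CE * γ ^ (j - ℓ)))) := by
          refine (mulVec_norm_le _ _).trans ?_
          refine mul_le_mul (hRbar_pow ℓ) ?_ (norm_nonneg _) (mul_nonneg hMR.le (pow_nonneg hγR.1.le ℓ))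
          exact (mulVec_norm_le _ _).trans
            (mul_le_mul_of_nonneg_left (wbd _) hCL0)
        refine c1.trans (le_of_eq ?_)
        rw [hγρ, mul_pow]
        have hpow : γ ^ ℓ * γ ^ (j - ℓ) = γ ^ j := by
          rw [← pow_add]; congr 1; omega
        rw [← hpow]; ring
      calc ∑ ℓ ∈ Finset.range (j+1), ‖(Rbar ^ ℓ * L).mulVec (w (j + 1 - 1 - ℓ))‖
          ≤ ∑ ℓ ∈ Finset.range (j+1), (2 * CE * MR * opNorm L) * (ρ ^ ℓ * γ ^ j) :=
            Finset.sum_le_sum hterm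
        _ = (2 * CE * MR * opNorm L) * γ ^ j * ∑ ℓ ∈ Finset.range (j+1), ρ ^ ℓ := by
            rw [Finset.mul_sum]
            exact Finset.sum_congr rfl fun ℓ _ => by ring
        _ ≤ (2 * CE * MR * opNorm L) * γ ^ j * (1 - ρ)⁻¹ :=
            mul_le_mul_of_nonneg_left (geo _) (by positivity)
        _ = (2 * CE * MR * opNorm L * (1 - ρ)⁻¹ / γ) * γ ^ (j+1) := by
            rw [pow_succ]
            field_simp
  -- Step 6 : decay of the estimation error
  have hCRm : ∀ ℓ, opNorm (R ^ ℓ) ≤ ∑ i ∈ Finset.range η, opNorm (R ^ i) := by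
    intro ℓ
    rcases lt_or_ge ℓ η with hℓ | hℓ
    · exact Finset.single_le_sum (fun i _ => opNorm_nonneg' _) (Finset.mem_range.mpr hℓ)
    · have hz : R ^ ℓ = 0 := by
        rw [show ℓ = η + (ℓ - η) by omega, pow_add, hdeadbeat, Matrix.zero_mul]
      rw [hz, opNorm_zero']
      exact Finset.sum_nonneg fun i _ => opNorm_nonneg' _
  have hCRm0 : (0:ℝ) ≤ ∑ i ∈ Finset.range η, opNorm (R ^ i) :=
    Finset.sum_nonneg fun i _ => opNorm_nonneg' _
  have hγη : (0:ℝ) < γ ^ η := pow_pos hγ0 η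
  have hebd : ∀ k, ‖e k‖ ≤ ((∑ i ∈ Finset.range η, opNorm (R ^ i)) * Est / γ ^ η
      + (η:ℝ) * ((∑ i ∈ Finset.range η, opNorm (R ^ i)) * opNorm L * CE / γ ^ η)) * γ ^ k := by
    intro k
    rw [eform k, he0]
    have hT1 : ‖(R ^ k).mulVec (x 0)‖
        ≤ ((∑ i ∈ Finset.range η, opNorm (R ^ i)) * Est / γ ^ η) * γ ^ k := by
      rcases lt_or_ge k η with hk | hk
      · have c1 : ‖(R ^ k).mulVec (x 0)‖ ≤ (∑ i ∈ Finset.range η, opNorm (R ^ i)) * Est :=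
          (mulVec_norm_le _ _).trans (mul_le_mul (hCRm k) hx0 (norm_nonneg _) hCRm0)
        refine c1.trans ?_
        rw [div_mul_eq_mul_div, le_div_iff₀ hγη]
        have h2 : γ ^ η ≤ γ ^ k := pow_le_pow_of_le_one hγ0.le hγ1.le hk.le
        exact mul_le_mul_of_nonneg_left h2 (mul_nonneg hCRm0 hEst.le)
      · have hz : R ^ k = 0 := by
          rw [show k = η + (k - η) by omega, pow_add, hdeadbeat, Matrix.zero_mul]
        rw [hz, Matrix.zero_mulVec, norm_zero]
        exact mul_nonneg (div_nonneg (mul_nonneg hCRm0 hEst.le) hγη.le) (pow_nonneg hγ0.le k)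
    have hT2 : ‖∑ ℓ ∈ Finset.range k, (R ^ ℓ * L).mulVec (d (k - 1 - ℓ))‖
        ≤ (η:ℝ) * ((∑ i ∈ Finset.range η, opNorm (R ^ i)) * opNorm L * CE / γ ^ η) * γ ^ k := by
      have hsub : ∑ ℓ ∈ Finset.range k, (R ^ ℓ * L).mulVec (d (k - 1 - ℓ))
          = ∑ ℓ ∈ Finset.range (min k η), (R ^ ℓ * L).mulVec (d (k - 1 - ℓ)) := by
        symm
        apply Finset.sum_subset (Finset.range_subset_range.mpr (min_le_left _ _))
        intro ℓ h1' h2'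
        simp only [Finset.mem_range] at h1' h2'
        have hz : R ^ ℓ = 0 := by
          rw [show ℓ = η + (ℓ - η) by omega, pow_add, hdeadbeat, Matrix.zero_mul]
        rw [hz, Matrix.zero_mul, Matrix.zero_mulVec]
      rw [hsub]
      refine (norm_sum_le _ _).trans ?_
      have hterm : ∀ ℓ ∈ Finset.range (min k η),
          ‖(R ^ ℓ * L).mulVec (d (k - 1 - ℓ))‖
            ≤ (∑ i ∈ Finset.range η, opNorm (R ^ i)) * opNorm L * CE / γ ^ η * γ ^ k := by
        intro ℓ hℓ
        simp only [Finset.mem_range, lt_min_iff] at hℓ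
        have hd1 : ‖d (k - 1 - ℓ)‖ ≤ CE * γ ^ (k - 1 - ℓ) :=
          ((dbd' _).trans (div_le_self (Enn _) hN1)).trans (EdecayG _)
        have c1 : ‖(R ^ ℓ * L).mulVec (d (k - 1 - ℓ))‖
            ≤ (∑ i ∈ Finset.range η, opNorm (R ^ i)) * (opNorm L * (CE * γ ^ (k - 1 - ℓ))) := by
          rw [← Matrix.mulVec_mulVec]
          refine (mulVec_norm_le _ _).trans ?_
          refine mul_le_mul (hCRm ℓ) ?_ (norm_nonneg _) hCRm0
          exact (mulVec_norm_le _ _).trans (mul_le_mul_of_nonneg_left hd1 hCL0)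
        refine c1.trans ?_
        rw [div_mul_eq_mul_div, le_div_iff₀ hγη]
        have h2 : γ ^ (k - 1 - ℓ) * γ ^ η ≤ γ ^ k := by
          rw [← pow_add]
          exact pow_le_pow_of_le_one hγ0.le hγ1.le (by omega)
        calc (∑ i ∈ Finset.range η, opNorm (R ^ i)) * (opNorm L * (CE * γ ^ (k - 1 - ℓ))) * γ ^ η
            = ((∑ i ∈ Finset.range η, opNorm (R ^ i)) * opNorm L * CE)
                * (γ ^ (k - 1 - ℓ) * γ ^ η) := by ring
          _ ≤ ((∑ i ∈ Finset.range η, opNorm (R ^ i)) * opNorm L * CE) * γ ^ k :=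
              mul_le_mul_of_nonneg_left h2
                (mul_nonneg (mul_nonneg hCRm0 hCL0) hCE0.le)
      calc ∑ ℓ ∈ Finset.range (min k η), ‖(R ^ ℓ * L).mulVec (d (k - 1 - ℓ))‖
          ≤ ∑ ℓ ∈ Finset.range (min k η),
              (∑ i ∈ Finset.range η, opNorm (R ^ i)) * opNorm L * CE / γ ^ η * γ ^ k :=
            Finset.sum_le_sum hterm
        _ = ((min k η : ℕ) : ℝ)
              * ((∑ i ∈ Finset.range η, opNorm (R ^ i)) * opNorm L * CE / γ ^ η * γ ^ k) := by
            rw [Finset.sum_const, Finset.card_range, nsmul_eq_mul]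
        _ ≤ (η:ℝ)
              * ((∑ i ∈ Finset.range η, opNorm (R ^ i)) * opNorm L * CE / γ ^ η * γ ^ k) := by
            refine mul_le_mul_of_nonneg_right ?_ ?_
            · exact_mod_cast Nat.cast_le.mpr (min_le_right k η)
            · exact mul_nonneg (div_nonneg (mul_nonneg (mul_nonneg hCRm0 hCL0) hCE0.le) hγη.le)
                (pow_nonneg hγ0.le k)
        _ = (η:ℝ) * ((∑ i ∈ Finset.range η, opNorm (R ^ i)) * opNorm L * CE / γ ^ η)
              * γ ^ k := by ring
    refine (norm_add_le _ _).trans ?_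
    rw [add_mul]
    exact add_le_add hT1 hT2
  -- Conclusion
  have h1ρ : (0:ℝ) < 1 - ρ := by linarith
  have hA0 : (0:ℝ) ≤ (∑ i ∈ Finset.range η, opNorm (R ^ i)) * Est / γ ^ η :=
    div_nonneg (mul_nonneg hCRm0 hEst.le) hγη.le
  have hB0 : (0:ℝ) ≤ (η:ℝ) * ((∑ i ∈ Finset.range η, opNorm (R ^ i)) * opNorm L * CE / γ ^ η) :=
    mul_nonneg (Nat.cast_nonneg η)
      (div_nonneg (mul_nonneg (mul_nonneg hCRm0 hCL0) hCE0.le) hγη.le)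
  have hC0 : (0:ℝ) ≤ 2 * CE * MR * opNorm L * (1 - ρ)⁻¹ / γ :=
    div_nonneg (mul_nonneg (mul_nonneg (mul_nonneg (by linarith) hMR.le) hCL0)
      (inv_nonneg.mpr h1ρ.le)) hγ0.le
  refine ⟨cl1, (∑ i ∈ Finset.range η, opNorm (R ^ i)) * Est / γ ^ η
      + (η:ℝ) * ((∑ i ∈ Finset.range η, opNorm (R ^ i)) * opNorm L * CE / γ ^ η)
      + 2 * CE * MR * opNorm L * (1 - ρ)⁻¹ / γ + 1, by linarith, γ, ⟨hγ0, hγ1⟩, ?_⟩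
  intro k
  have hγk : (0:ℝ) ≤ γ ^ k := pow_nonneg hγ0.le k
  have h1 := hebd k
  have h2 := hxhbd k
  constructor
  · have hxe : x k = e k + xhat k := by rw [he]; funext i; simp
    rw [hxe]
    refine (norm_add_le _ _).trans ?_
    nlinarith [h1, h2, hγk]
  · refine h2.trans ?_
    refine mul_le_mul_of_nonneg_right ?_ hγk
    linarith
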